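/- Fix t ∈ [0,1] and a real c with κ⁻·t² + μ⁻·(1 − t²) ≤ c ≤ κ⁺·t² + μ⁺·(1 − t²). Then there exists v̂ ∈ [0,1] such that f^HS(t;v̂) = c and the feasibility set in the volume fraction is exactly the interval {v ∈ [0,1] : c ≤ f^HS(t;v)} = [v̂, 1]. -/

import Mathlib

open Real

/-- The square root `s = √(1 - t²)`. -/
noncomputable def sHS (t : ℝ) : ℝ := Real.sqrt (1 - t ^ 2)

/-- The Hashin–Shtrikman correction term `q(t; v)` for two well-ordered isotropic
plane-stress phases with bulk moduli `κm < κp` and shear moduli `μm < μp`. -/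
noncomputable def qHS (κm κp μm μp t v : ℝ) : ℝ :=
  if v * (κp - κm) * t ≤ (κp + μp - (κp - κm) * v) * sHS t ∧
     v * (μp - μm) * sHS t ≤ (κp + μp - (μp - μm) * v) * t then
    v * (1 - v) * ((κp - κm) * t - (μp - μm) * sHS t) ^ 2 /
      (κp + μp - ((κp - κm) + (μp - μm)) * v)
  else if (κp + μp - (κp - κm) * v) * sHS t < v * (κp - κm) * t then
    (1 - v) * (v * (κp - κm) ^ 2 * t ^ 2 / (κp + μp - (κp - κm) * v)
      - (μp - μm) * (sHS t) ^ 2)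
  else
    (1 - v) * (v * (μp - μm) ^ 2 * (sHS t) ^ 2 / (κp + μp - (μp - μm) * v)
      - (κp - κm) * t ^ 2)

/-- The Hashin–Shtrikman upper-bound function `f^HS(t; v)`:
the Voigt energy minus the correction `q(t; v)`. -/
noncomputable def fHS (κm κp μm μp t v : ℝ) : ℝ :=
  (κm + v * (κp - κm)) * t ^ 2 + (μm + v * (μp - μm)) * (1 - t ^ 2)
    - qHS κm κp μm μp t v

lemma hs_KI (A B K t s u v : ℝ) (hA : 0 < A) (hB : 0 < B) (hABK : A + B < K)
    (ht : 0 ≤ t) (hs : 0 ≤ s) (hu : 0 ≤ u) (huv : u ≤ v) (hv1 : v ≤ 1) :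
    (A*t - B*s)^2 * (K*(1-u-v) + (A+B)*u*v)
      ≤ (A*t^2 + B*s^2) * ((K - (A+B)*u) * (K - (A+B)*v)) := by
  have hv0 : 0 ≤ v := hu.trans huv
  have hu1 : u ≤ 1 := huv.trans hv1
  have hKc : 0 < K - (A+B) := by linarith
  have hK0 : 0 < K := by linarith
  have hc2 : (A*t - B*s)^2 ≤ K * (A*t^2 + B*s^2) := by
    have h1 : 0 ≤ A*(K-A)*t^2 := mul_nonneg (mul_nonneg hA.le (by linarith)) (sq_nonneg t)
    have h2 : 0 ≤ B*(K-B)*s^2 := mul_nonneg (mul_nonneg hB.le (by linarith)) (sq_nonneg s)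
    have h3 : 0 ≤ 2*(A*B*(t*s)) := by positivity
    have hid : K * (A*t^2 + B*s^2) - (A*t - B*s)^2
        = A*(K-A)*t^2 + B*(K-B)*s^2 + 2*(A*B*(t*s)) := by ring
    linarith
  have hc1 : 0 ≤ A*t^2 + B*s^2 := by positivity
  have hc2' : 0 ≤ (A*t - B*s)^2 := sq_nonneg _
  have hDv : 0 < K - (A+B)*v := by nlinarith
  set c1 := A*t^2 + B*s^2 with hc1def
  set c2 := (A*t - B*s)^2 with hc2def
  set c3 := A + B with hc3
  have hc3pos : 0 < c3 := by positivity
  have hin : 0 ≤ (1-v)*(K*c1 - c2) + c1*v*(K - c3) := by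
    have h1 : 0 ≤ (1-v)*(K*c1 - c2) := mul_nonneg (by linarith) (by linarith)
    have h2 : 0 ≤ c1*v*(K - c3) := mul_nonneg (mul_nonneg hc1 hv0) (by linarith)
    linarith
  have hF0 : 0 ≤ K * ((1-v)*(K*c1 - c2) + c1*v*(K - c3)) := mul_nonneg hK0.le hin
  have hFv : 0 ≤ c1 * ((K - c3*v) * (K - c3*v)) - c2 * (K*(1-v-v) + c3*v*v) := by
    have h1 : 0 ≤ (K - c3*v) * ((1-v)*(K*c1 - c2) + c1*v*(K - c3)) := mul_nonneg hDv.le hin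
    have h2 : 0 ≤ c2*v*(K - c3) := mul_nonneg (mul_nonneg hc2' hv0) (by linarith)
    have hid : c1 * ((K - c3*v) * (K - c3*v)) - c2 * (K*(1-v-v) + c3*v*v)
        = (K - c3*v) * ((1-v)*(K*c1 - c2) + c1*v*(K - c3)) + c2*v*(K - c3) := by ring
    linarith
  rcases eq_or_lt_of_le hv0 with h0 | hvpos
  · have hu0 : u = 0 := le_antisymm (huv.trans h0.symm.le) hu
    have hmul := mul_le_mul_of_nonneg_right hc2 hK0.le
    rw [hu0, ← h0]
    nlinarith [hmul]
  · have key : v * (c1 * ((K - c3*u) * (K - c3*v)) - c2 * (K*(1-u-v) + c3*u*v))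
        = (v - u) * (K * ((1-v)*(K*c1 - c2) + c1*v*(K - c3)))
          + u * (c1 * ((K - c3*v) * (K - c3*v)) - c2 * (K*(1-v-v) + c3*v*v)) := by
      ring
    have h1 : 0 ≤ (v - u) * (K * ((1-v)*(K*c1 - c2) + c1*v*(K - c3))) :=
      mul_nonneg (by linarith) hF0
    have h2 : 0 ≤ u * (c1 * ((K - c3*v) * (K - c3*v)) - c2 * (K*(1-v-v) + c3*v*v)) :=
      mul_nonneg hu hFv
    have hsum : 0 ≤ v * (c1 * ((K - c3*u) * (K - c3*v)) - c2 * (K*(1-u-v) + c3*u*v)) := by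
      rw [key]; linarith
    have := (mul_nonneg_iff_of_pos_left hvpos).mp hsum
    linarith

lemma hs_mono1 (κm μm A B K t s : ℝ) (hA : 0 < A) (hB : 0 < B) (hABK : A + B < K)
    (ht : 0 ≤ t) (hs : 0 ≤ s) (hs2 : s^2 = 1 - t^2) :
    MonotoneOn (fun v => (κm + v*A)*t^2 + (μm + v*B)*(1 - t^2)
      - v*(1-v)*(A*t - B*s)^2/(K - (A+B)*v)) (Set.Icc 0 1) := by
  rintro u ⟨hu0, hu1⟩ v ⟨hv0, hv1⟩ huv
  simp only
  have hDu : 0 < K - (A+B)*u := by nlinarith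
  have hDv : 0 < K - (A+B)*v := by nlinarith
  have hKI := hs_KI A B K t s u v hA hB hABK ht hs hu0 huv hv1
  have hdiff : ((κm + v*A)*t^2 + (μm + v*B)*(1 - t^2)
        - v*(1-v)*(A*t - B*s)^2/(K - (A+B)*v))
      - ((κm + u*A)*t^2 + (μm + u*B)*(1 - t^2)
        - u*(1-u)*(A*t - B*s)^2/(K - (A+B)*u))
      = (v - u) * ((A*t^2 + B*s^2) * ((K - (A+B)*u) * (K - (A+B)*v))
          - (A*t - B*s)^2 * (K*(1-u-v) + (A+B)*u*v))
        / ((K - (A+B)*u) * (K - (A+B)*v)) := by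
    rw [← hs2]
    field_simp [mul_comm u (A+B) ▸ hDu.ne', mul_comm v (A+B) ▸ hDv.ne']
    ring
  have hq : 0 ≤ (v - u) * ((A*t^2 + B*s^2) * ((K - (A+B)*u) * (K - (A+B)*v))
          - (A*t - B*s)^2 * (K*(1-u-v) + (A+B)*u*v))
        / ((K - (A+B)*u) * (K - (A+B)*v)) := by
    apply div_nonneg _ (mul_nonneg hDu.le hDv.le)
    exact mul_nonneg (by linarith) (by linarith)
  linarith

lemma hs_mono2 (κm μm A B K t s : ℝ) (hA : 0 < A) (hB : 0 < B) (hABK : A + B < K)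
    (hs2 : s^2 = 1 - t^2) :
    MonotoneOn (fun v => (κm + v*A)*t^2 + (μm + v*B)*(1 - t^2)
      - (1-v)*(v*A^2*t^2/(K - A*v) - B*s^2)) (Set.Icc 0 1) := by
  rintro u ⟨hu0, hu1⟩ v ⟨hv0, hv1⟩ huv
  simp only
  have hDu : 0 < K - A*u := by nlinarith
  have hDv : 0 < K - A*v := by nlinarith
  have hdiff : ((κm + v*A)*t^2 + (μm + v*B)*(1 - t^2) - (1-v)*(v*A^2*t^2/(K - A*v) - B*s^2))
      - ((κm + u*A)*t^2 + (μm + u*B)*(1 - t^2) - (1-u)*(u*A^2*t^2/(K - A*u) - B*s^2))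
      = (v - u) * (K * (K - A) * (A * t^2)) / ((K - A*u) * (K - A*v)) := by
    rw [← hs2]
    field_simp [mul_comm u A ▸ hDu.ne', mul_comm v A ▸ hDv.ne']
    ring
  have hq : 0 ≤ (v - u) * (K * (K - A) * (A * t^2)) / ((K - A*u) * (K - A*v)) := by
    apply div_nonneg _ (mul_nonneg hDu.le hDv.le)
    apply mul_nonneg (by linarith)
    apply mul_nonneg (mul_nonneg (by linarith) (by linarith))
    positivity
  linarith

lemma hs_mono3 (κm μm A B K t s : ℝ) (hA : 0 < A) (hB : 0 < B) (hABK : A + B < K)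
    (hs2 : s^2 = 1 - t^2) :
    MonotoneOn (fun v => (κm + v*A)*t^2 + (μm + v*B)*(1 - t^2)
      - (1-v)*(v*B^2*s^2/(K - B*v) - A*t^2)) (Set.Icc 0 1) := by
  rintro u ⟨hu0, hu1⟩ v ⟨hv0, hv1⟩ huv
  simp only
  have hDu : 0 < K - B*u := by nlinarith
  have hDv : 0 < K - B*v := by nlinarith
  have hdiff : ((κm + v*A)*t^2 + (μm + v*B)*(1 - t^2) - (1-v)*(v*B^2*s^2/(K - B*v) - A*t^2))
      - ((κm + u*A)*t^2 + (μm + u*B)*(1 - t^2) - (1-u)*(u*B^2*s^2/(K - B*u) - A*t^2))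
      = (v - u) * (K * (K - B) * (B * s^2)) / ((K - B*u) * (K - B*v)) := by
    rw [← hs2]
    field_simp [mul_comm u B ▸ hDu.ne', mul_comm v B ▸ hDv.ne']
    ring
  have hq : 0 ≤ (v - u) * (K * (K - B) * (B * s^2)) / ((K - B*u) * (K - B*v)) := by
    apply div_nonneg _ (mul_nonneg hDu.le hDv.le)
    apply mul_nonneg (by linarith)
    apply mul_nonneg (mul_nonneg (by linarith) (by linarith))
    positivity
  linarith

-- boundary identity: on the constraint boundary the two branch formulas agree
lemma hs_bdry (A B K t s v : ℝ) (hd1 : K - (A+B)*v ≠ 0) (hd2 : K - A*v ≠ 0)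
    (heq : v*A*t = (K - A*v)*s) :
    v*(1-v)*(A*t - B*s)^2/(K - (A+B)*v) = (1-v)*(v*A^2*t^2/(K - A*v) - B*s^2) := by
  have hs' : s = v*A*t/(K - A*v) := by
    rw [eq_div_iff hd2]; linarith [heq]
  subst hs'
  field_simp [mul_comm v A ▸ hd2, mul_comm v (A+B) ▸ hd1]
  ring

-- the second region-1 condition holds on the first boundary
lemma hs_cond2_at (A B K t s w : ℝ) (hA : 0 < A) (hB : 0 < B) (hABK : A + B < K)
    (ht : 0 ≤ t) (hs : 0 ≤ s) (hw0 : 0 ≤ w) (hw1 : w ≤ 1)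
    (heq : w*A*t = (K - A*w)*s) :
    w*B*s ≤ (K - B*w)*t := by
  have hDw2 : 0 < K - A*w := by nlinarith
  have hDw3 : 0 < K - B*w := by nlinarith
  rcases eq_or_lt_of_le hs with h0 | hspos
  · rw [← h0]
    have : 0 ≤ (K - B*w)*t := mul_nonneg hDw3.le ht
    linarith
  · by_contra hcon
    push_neg at hcon
    have htpos : 0 < t := by
      rcases eq_or_lt_of_le ht with h0 | h; · exfalso; nlinarith
      exact h
    have hwAt : 0 < w*A*t := by rw [heq]; positivity
    have hmul : (K - A*w)*s * ((K - B*w)*t) < w*A*t * (w*B*s) :=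
      heq ▸ mul_lt_mul_of_pos_left hcon hwAt
    have hKw : 0 < K - (A+B)*w := by nlinarith
    have hK0 : 0 < K := by linarith
    have hpos : 0 < t*s*(K*(K - (A+B)*w)) :=
      mul_pos (mul_pos htpos hspos) (mul_pos hK0 hKw)
    nlinarith [hmul, hpos]

lemma hs_bdry3 (A B K t s v : ℝ) (hd1 : K - (A+B)*v ≠ 0) (hd3 : K - B*v ≠ 0)
    (heq : v*B*s = (K - B*v)*t) :
    v*(1-v)*(A*t - B*s)^2/(K - (A+B)*v) = (1-v)*(v*B^2*s^2/(K - B*v) - A*t^2) := by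
  have ht' : t = v*B*s/(K - B*v) := by
    rw [eq_div_iff hd3]; linarith [heq]
  subst ht'
  field_simp [mul_comm v B ▸ hd3, mul_comm v (A+B) ▸ hd1]
  ring

lemma hs_cont1 (κm μm A B K t s : ℝ) (hA : 0 < A) (hB : 0 < B) (hABK : A + B < K) :
    ContinuousOn (fun v => (κm + v*A)*t^2 + (μm + v*B)*(1 - t^2)
      - v*(1-v)*(A*t - B*s)^2/(K - (A+B)*v)) (Set.Icc 0 1) := by
  apply ContinuousOn.sub (Continuous.continuousOn (by fun_prop))
  apply ContinuousOn.div (Continuous.continuousOn (by fun_prop))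
    (Continuous.continuousOn (by fun_prop))
  rintro x ⟨hx0, hx1⟩
  have : 0 < K - (A+B)*x := by nlinarith
  exact this.ne'

lemma hs_cont2 (κm μm A B K t s : ℝ) (hA : 0 < A) (hB : 0 < B) (hABK : A + B < K) :
    ContinuousOn (fun v => (κm + v*A)*t^2 + (μm + v*B)*(1 - t^2)
      - (1-v)*(v*A^2*t^2/(K - A*v) - B*s^2)) (Set.Icc 0 1) := by
  apply ContinuousOn.sub (Continuous.continuousOn (by fun_prop))
  apply ContinuousOn.mul (Continuous.continuousOn (by fun_prop))
  apply ContinuousOn.sub _ (Continuous.continuousOn (by fun_prop))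
  apply ContinuousOn.div (Continuous.continuousOn (by fun_prop))
    (Continuous.continuousOn (by fun_prop))
  rintro x ⟨hx0, hx1⟩
  have : 0 < K - A*x := by nlinarith
  exact this.ne'

lemma hs_cont3 (κm μm A B K t s : ℝ) (hA : 0 < A) (hB : 0 < B) (hABK : A + B < K) :
    ContinuousOn (fun v => (κm + v*A)*t^2 + (μm + v*B)*(1 - t^2)
      - (1-v)*(v*B^2*s^2/(K - B*v) - A*t^2)) (Set.Icc 0 1) := by
  apply ContinuousOn.sub (Continuous.continuousOn (by fun_prop))
  apply ContinuousOn.mul (Continuous.continuousOn (by fun_prop))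
  apply ContinuousOn.sub _ (Continuous.continuousOn (by fun_prop))
  apply ContinuousOn.div (Continuous.continuousOn (by fun_prop))
    (Continuous.continuousOn (by fun_prop))
  rintro x ⟨hx0, hx1⟩
  have : 0 < K - B*x := by nlinarith
  exact this.ne'
open Set

lemma hs_core (f g1 g2 : ℝ → ℝ) (w c : ℝ) (hw0 : 0 ≤ w) (hw1 : w ≤ 1)
    (h1 : ∀ v ∈ Icc (0:ℝ) w, f v = g1 v) (h2 : ∀ v ∈ Ioc w 1, f v = g2 v)
    (hg1c : ContinuousOn g1 (Icc 0 w)) (hg2c : ContinuousOn g2 (Icc w 1))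
    (hg1m : MonotoneOn g1 (Icc 0 w)) (hg2m : MonotoneOn g2 (Icc w 1))
    (heq : g1 w = g2 w) (hc1 : g1 0 ≤ c) (hc2 : c ≤ g2 1) :
    ∃ vhat ∈ Icc (0:ℝ) 1, f vhat = c ∧
      {v : ℝ | v ∈ Icc (0:ℝ) 1 ∧ c ≤ f v} = Icc vhat 1 := by
  have hfw : f w = g1 w := h1 w ⟨hw0, le_refl _⟩
  by_cases hcw : c ≤ g1 w
  · -- vhat in [0, w]
    have himg := intermediate_value_Icc hw0 hg1c
    obtain ⟨x, hx, hxc⟩ := himg ⟨hc1, hcw⟩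
    set E : Set ℝ := Icc (0:ℝ) w ∩ g1 ⁻¹' {c} with hE
    have hEc : IsClosed E := hg1c.preimage_isClosed_of_isClosed isClosed_Icc isClosed_singleton
    have hEne : E.Nonempty := ⟨x, hx, hxc⟩
    have hEbdd : BddBelow E := ⟨0, fun y hy => hy.1.1⟩
    have hvE : sInf E ∈ E := hEc.csInf_mem hEne hEbdd
    set vhat := sInf E with hvh
    have hv0 : 0 ≤ vhat := hvE.1.1
    have hvw : vhat ≤ w := hvE.1.2
    have hgv : g1 vhat = c := hvE.2
    refine ⟨vhat, ⟨hv0, hvw.trans hw1⟩, by rw [h1 vhat ⟨hv0, hvw⟩]; exact hgv, ?_⟩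
    ext v
    simp only [mem_setOf_eq, mem_Icc]
    constructor
    · rintro ⟨⟨hv0', hv1'⟩, hcf⟩
      refine ⟨?_, hv1'⟩
      by_contra hlt
      push_neg at hlt
      have hvw' : v ≤ w := hlt.le.trans hvw
      have hfv : f v = g1 v := h1 v ⟨hv0', hvw'⟩
      have : g1 v ≤ g1 vhat := hg1m ⟨hv0', hvw'⟩ ⟨hv0, hvw⟩ hlt.le
      have hgvc : g1 v = c := le_antisymm (this.trans_eq hgv) (hcf.trans_eq (hfv))
      exact absurd (csInf_le hEbdd ⟨⟨hv0', hvw'⟩, hgvc⟩) (not_le.mpr hlt)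
    · rintro ⟨hvv, hv1'⟩
      refine ⟨⟨hv0.trans hvv, hv1'⟩, ?_⟩
      by_cases hvw' : v ≤ w
      · rw [h1 v ⟨hv0.trans hvv, hvw'⟩]
        exact hgv ▸ hg1m ⟨hv0, hvw⟩ ⟨hv0.trans hvv, hvw'⟩ hvv
      · push_neg at hvw'
        rw [h2 v ⟨hvw', hv1'⟩]
        calc c = g1 vhat := hgv.symm
          _ ≤ g1 w := hg1m ⟨hv0, hvw⟩ ⟨hw0, le_refl _⟩ hvw
          _ = g2 w := heq
          _ ≤ g2 v := hg2m ⟨le_refl _, hw1⟩ ⟨hvw'.le, hv1'⟩ hvw'.le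
  · push_neg at hcw
    have hg2w : g2 w < c := heq ▸ hcw
    have himg := intermediate_value_Icc hw1 hg2c
    obtain ⟨x, hx, hxc⟩ := himg ⟨hg2w.le, hc2⟩
    set E : Set ℝ := Icc w 1 ∩ g2 ⁻¹' {c} with hE
    have hEc : IsClosed E := hg2c.preimage_isClosed_of_isClosed isClosed_Icc isClosed_singleton
    have hEne : E.Nonempty := ⟨x, hx, hxc⟩
    have hEbdd : BddBelow E := ⟨w, fun y hy => hy.1.1⟩
    have hvE : sInf E ∈ E := hEc.csInf_mem hEne hEbdd
    set vhat := sInf E with hvh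
    have hvw : w ≤ vhat := hvE.1.1
    have hv1 : vhat ≤ 1 := hvE.1.2
    have hgv : g2 vhat = c := hvE.2
    have hwlt : w < vhat := hvw.lt_of_ne (fun h => hg2w.ne (h ▸ hgv))
    refine ⟨vhat, ⟨hw0.trans hvw, hv1⟩, by rw [h2 vhat ⟨hwlt, hv1⟩]; exact hgv, ?_⟩
    ext v
    simp only [mem_setOf_eq, mem_Icc]
    constructor
    · rintro ⟨⟨hv0', hv1'⟩, hcf⟩
      refine ⟨?_, hv1'⟩
      by_cases hvw' : v ≤ w
      · exfalso
        have hfv : f v = g1 v := h1 v ⟨hv0', hvw'⟩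
        have : g1 v ≤ g1 w := hg1m ⟨hv0', hvw'⟩ ⟨hw0, le_refl _⟩ hvw'
        rw [hfv] at hcf
        linarith
      · push_neg at hvw'
        by_contra hlt
        push_neg at hlt
        have hfv : f v = g2 v := h2 v ⟨hvw', hv1'⟩
        have : g2 v ≤ g2 vhat := hg2m ⟨hvw'.le, hv1'⟩ ⟨hvw, hv1⟩ hlt.le
        have hgvc : g2 v = c := le_antisymm (this.trans_eq hgv) (hcf.trans_eq hfv)
        exact absurd (csInf_le hEbdd ⟨⟨hvw'.le, hv1'⟩, hgvc⟩) (not_le.mpr hlt)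
    · rintro ⟨hvv, hv1'⟩
      have hwv : w < v := hwlt.trans_le hvv
      refine ⟨⟨hw0.trans hwv.le, hv1'⟩, ?_⟩
      rw [h2 v ⟨hwv, hv1'⟩]
      exact hgv ▸ hg2m ⟨hvw, hv1⟩ ⟨hwv.le, hv1'⟩ hvv

set_option maxHeartbeats 1600000 in
/-- For fixed `t ∈ [0,1]` and any `c` between the pure-phase energies, there is
an activating volume fraction `v̂ ∈ [0,1]` with `f^HS(t;v̂) = c`, and the
feasibility set in the volume fraction is exactly the interval `[v̂, 1]`. -/
theorem hs_feasibility_interval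
    (κm κp μm μp : ℝ) (hκm : 0 < κm) (hκ : κm < κp) (hμm : 0 < μm) (hμ : μm < μp)
    (t : ℝ) (ht : t ∈ Set.Icc (0 : ℝ) 1) (c : ℝ)
    (hc₁ : κm * t ^ 2 + μm * (1 - t ^ 2) ≤ c)
    (hc₂ : c ≤ κp * t ^ 2 + μp * (1 - t ^ 2)) :
    ∃ vhat ∈ Set.Icc (0 : ℝ) 1, fHS κm κp μm μp t vhat = c ∧
      {v : ℝ | v ∈ Set.Icc (0 : ℝ) 1 ∧ c ≤ fHS κm κp μm μp t v} = Set.Icc vhat 1 := by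
  obtain ⟨ht0, ht1⟩ := ht
  have hA : 0 < κp - κm := by linarith
  have hB : 0 < μp - μm := by linarith
  have hABK : (κp - κm) + (μp - μm) < κp + μp := by linarith
  have hK0 : 0 < κp + μp := by linarith
  have hs0 : 0 ≤ sHS t := Real.sqrt_nonneg _
  have hs2 : (sHS t) ^ 2 = 1 - t ^ 2 := by
    rw [sHS]; exact Real.sq_sqrt (by nlinarith)
  have hts1 : 1 ≤ t + sHS t := by nlinarith [mul_nonneg ht0 hs0, hs2]
  by_cases hcase2 : (κp + μp - (κp - κm)) * sHS t < (κp - κm) * t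
  · -- region 2 is active near v = 1
    have hAts : 0 < (κp - κm) * (t + sHS t) := mul_pos hA (by linarith)
    set w := (κp + μp) * sHS t / ((κp - κm) * (t + sHS t)) with hwdef
    have hwKs : w * ((κp - κm) * (t + sHS t)) = (κp + μp) * sHS t := by
      rw [hwdef]; field_simp
    have hw0 : 0 ≤ w := by
      rw [hwdef]; exact div_nonneg (mul_nonneg hK0.le hs0) hAts.le
    have hw1 : w < 1 := by
      rw [hwdef, div_lt_one hAts]; nlinarith [hcase2]
    have heqw : w * (κp - κm) * t = (κp + μp - (κp - κm) * w) * sHS t := by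
      nlinarith [hwKs]
    have hcond2w : w * (μp - μm) * sHS t ≤ (κp + μp - (μp - μm) * w) * t :=
      hs_cond2_at (κp - κm) (μp - μm) (κp + μp) t (sHS t) w hA hB hABK ht0 hs0 hw0
        hw1.le heqw
    refine hs_core (fHS κm κp μm μp t)
      (fun v => (κm + v * (κp - κm)) * t ^ 2 + (μm + v * (μp - μm)) * (1 - t ^ 2)
        - v * (1 - v) * ((κp - κm) * t - (μp - μm) * sHS t) ^ 2
          / (κp + μp - ((κp - κm) + (μp - μm)) * v))
      (fun v => (κm + v * (κp - κm)) * t ^ 2 + (μm + v * (μp - μm)) * (1 - t ^ 2)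
        - (1 - v) * (v * (κp - κm) ^ 2 * t ^ 2 / (κp + μp - (κp - κm) * v)
          - (μp - μm) * (sHS t) ^ 2))
      w c hw0 hw1.le ?_ ?_ ?_ ?_ ?_ ?_ ?_ ?_ ?_
    · rintro v ⟨hv0, hvw⟩
      have h := mul_le_mul_of_nonneg_right hvw hAts.le
      have hc1v : v * (κp - κm) * t ≤ (κp + μp - (κp - κm) * v) * sHS t := by
        nlinarith [hwKs, h]
      have hc2v : v * (μp - μm) * sHS t ≤ (κp + μp - (μp - μm) * v) * t := by
        have h2 := mul_le_mul_of_nonneg_right hvw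
          (le_of_lt (mul_pos hB (by linarith : (0:ℝ) < t + sHS t)))
        nlinarith [hcond2w, h2]
      simp only [fHS, qHS]
      rw [if_pos ⟨hc1v, hc2v⟩]
    · rintro v ⟨hwv, hv1'⟩
      have h := mul_lt_mul_of_pos_right hwv hAts
      have hstrict : (κp + μp - (κp - κm) * v) * sHS t < v * (κp - κm) * t := by
        nlinarith [hwKs, h]
      simp only [fHS, qHS]
      rw [if_neg (fun hcc => absurd hcc.1 (not_le.mpr hstrict)), if_pos hstrict]
    · exact (hs_cont1 κm μm (κp - κm) (μp - μm) (κp + μp) t (sHS t) hA hB hABK).mono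
        (Set.Icc_subset_Icc le_rfl hw1.le)
    · exact (hs_cont2 κm μm (κp - κm) (μp - μm) (κp + μp) t (sHS t) hA hB hABK).mono
        (Set.Icc_subset_Icc hw0 le_rfl)
    · exact (hs_mono1 κm μm (κp - κm) (μp - μm) (κp + μp) t (sHS t) hA hB hABK ht0 hs0
        hs2).mono (Set.Icc_subset_Icc le_rfl hw1.le)
    · exact (hs_mono2 κm μm (κp - κm) (μp - μm) (κp + μp) t (sHS t) hA hB hABK
        hs2).mono (Set.Icc_subset_Icc hw0 le_rfl)
    · have hd1 : κp + μp - ((κp - κm) + (μp - μm)) * w ≠ 0 := by nlinarith [hw0, hw1]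
      have hd2 : κp + μp - (κp - κm) * w ≠ 0 := by nlinarith [hw0, hw1]
      have hb := hs_bdry (κp - κm) (μp - μm) (κp + μp) t (sHS t) w hd1 hd2 heqw
      beta_reduce
      rw [hb]
    · beta_reduce
      have e0 : (κm + 0 * (κp - κm)) * t ^ 2 + (μm + 0 * (μp - μm)) * (1 - t ^ 2)
          - 0 * (1 - 0) * ((κp - κm) * t - (μp - μm) * sHS t) ^ 2
            / (κp + μp - ((κp - κm) + (μp - μm)) * 0)
          = κm * t ^ 2 + μm * (1 - t ^ 2) := by ring
      linarith [e0, hc₁]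
    · beta_reduce
      have e1 : (κm + 1 * (κp - κm)) * t ^ 2 + (μm + 1 * (μp - μm)) * (1 - t ^ 2)
          - (1 - 1) * (1 * (κp - κm) ^ 2 * t ^ 2 / (κp + μp - (κp - κm) * 1)
            - (μp - μm) * (sHS t) ^ 2)
          = κp * t ^ 2 + μp * (1 - t ^ 2) := by ring
      linarith [e1, hc₂]
  · push_neg at hcase2
    by_cases hcase3 : (κp + μp - (μp - μm)) * t < (μp - μm) * sHS t
    · -- region 3 is active near v = 1
      have hBts : 0 < (μp - μm) * (t + sHS t) := mul_pos hB (by linarith)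
      set w := (κp + μp) * t / ((μp - μm) * (t + sHS t)) with hwdef
      have hwKt : w * ((μp - μm) * (t + sHS t)) = (κp + μp) * t := by
        rw [hwdef]; field_simp
      have hw0 : 0 ≤ w := by
        rw [hwdef]; exact div_nonneg (mul_nonneg hK0.le ht0) hBts.le
      have hw1 : w < 1 := by
        rw [hwdef, div_lt_one hBts]; nlinarith [hcase3]
      have heqw : w * (μp - μm) * sHS t = (κp + μp - (μp - μm) * w) * t := by
        nlinarith [hwKt]
      have hcond1glob : ∀ v : ℝ, 0 ≤ v → v ≤ 1 →
          v * (κp - κm) * t ≤ (κp + μp - (κp - κm) * v) * sHS t := by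
        intro v hv0 hv1'
        have h := mul_le_mul_of_nonneg_right hv1'
          (le_of_lt (mul_pos hA (by linarith : (0:ℝ) < t + sHS t)))
        nlinarith [hcase2, h]
      refine hs_core (fHS κm κp μm μp t)
        (fun v => (κm + v * (κp - κm)) * t ^ 2 + (μm + v * (μp - μm)) * (1 - t ^ 2)
          - v * (1 - v) * ((κp - κm) * t - (μp - μm) * sHS t) ^ 2
            / (κp + μp - ((κp - κm) + (μp - μm)) * v))
        (fun v => (κm + v * (κp - κm)) * t ^ 2 + (μm + v * (μp - μm)) * (1 - t ^ 2)
          - (1 - v) * (v * (μp - μm) ^ 2 * (sHS t) ^ 2 / (κp + μp - (μp - μm) * v)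
            - (κp - κm) * t ^ 2))
        w c hw0 hw1.le ?_ ?_ ?_ ?_ ?_ ?_ ?_ ?_ ?_
      · rintro v ⟨hv0, hvw⟩
        have hc1v := hcond1glob v hv0 (hvw.trans hw1.le)
        have h2 := mul_le_mul_of_nonneg_right hvw hBts.le
        have hc2v : v * (μp - μm) * sHS t ≤ (κp + μp - (μp - μm) * v) * t := by
          nlinarith [hwKt, h2]
        simp only [fHS, qHS]
        rw [if_pos ⟨hc1v, hc2v⟩]
      · rintro v ⟨hwv, hv1'⟩
        have h := mul_lt_mul_of_pos_right hwv hBts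
        have hstrict : (κp + μp - (μp - μm) * v) * t < v * (μp - μm) * sHS t := by
          nlinarith [hwKt, h]
        have hc1v := hcond1glob v (hw0.trans hwv.le) hv1'
        simp only [fHS, qHS]
        rw [if_neg (fun hcc => absurd hcc.2 (not_le.mpr hstrict)),
          if_neg (not_lt.mpr hc1v)]
      · exact (hs_cont1 κm μm (κp - κm) (μp - μm) (κp + μp) t (sHS t) hA hB hABK).mono
          (Set.Icc_subset_Icc le_rfl hw1.le)
      · exact (hs_cont3 κm μm (κp - κm) (μp - μm) (κp + μp) t (sHS t) hA hB hABK).mono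
          (Set.Icc_subset_Icc hw0 le_rfl)
      · exact (hs_mono1 κm μm (κp - κm) (μp - μm) (κp + μp) t (sHS t) hA hB hABK ht0 hs0
          hs2).mono (Set.Icc_subset_Icc le_rfl hw1.le)
      · exact (hs_mono3 κm μm (κp - κm) (μp - μm) (κp + μp) t (sHS t) hA hB hABK
          hs2).mono (Set.Icc_subset_Icc hw0 le_rfl)
      · have hd1 : κp + μp - ((κp - κm) + (μp - μm)) * w ≠ 0 := by nlinarith [hw0, hw1]
        have hd3 : κp + μp - (μp - μm) * w ≠ 0 := by nlinarith [hw0, hw1]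
        have hb := hs_bdry3 (κp - κm) (μp - μm) (κp + μp) t (sHS t) w hd1 hd3 heqw
        beta_reduce
        rw [hb]
      · beta_reduce
        have e0 : (κm + 0 * (κp - κm)) * t ^ 2 + (μm + 0 * (μp - μm)) * (1 - t ^ 2)
            - 0 * (1 - 0) * ((κp - κm) * t - (μp - μm) * sHS t) ^ 2
              / (κp + μp - ((κp - κm) + (μp - μm)) * 0)
            = κm * t ^ 2 + μm * (1 - t ^ 2) := by ring
        linarith [e0, hc₁]
      · beta_reduce
        have e1 : (κm + 1 * (κp - κm)) * t ^ 2 + (μm + 1 * (μp - μm)) * (1 - t ^ 2)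
            - (1 - 1) * (1 * (μp - μm) ^ 2 * (sHS t) ^ 2 / (κp + μp - (μp - μm) * 1)
              - (κp - κm) * t ^ 2)
            = κp * t ^ 2 + μp * (1 - t ^ 2) := by ring
        linarith [e1, hc₂]
    · -- region 1 on all of [0,1]
      push_neg at hcase3
      refine hs_core (fHS κm κp μm μp t)
        (fun v => (κm + v * (κp - κm)) * t ^ 2 + (μm + v * (μp - μm)) * (1 - t ^ 2)
          - v * (1 - v) * ((κp - κm) * t - (μp - μm) * sHS t) ^ 2
            / (κp + μp - ((κp - κm) + (μp - μm)) * v))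
        (fun v => (κm + v * (κp - κm)) * t ^ 2 + (μm + v * (μp - μm)) * (1 - t ^ 2)
          - v * (1 - v) * ((κp - κm) * t - (μp - μm) * sHS t) ^ 2
            / (κp + μp - ((κp - κm) + (μp - μm)) * v))
        1 c zero_le_one le_rfl ?_ ?_ ?_ ?_ ?_ ?_ rfl ?_ ?_
      · rintro v ⟨hv0, hv1'⟩
        have hc1v : v * (κp - κm) * t ≤ (κp + μp - (κp - κm) * v) * sHS t := by
          have h := mul_le_mul_of_nonneg_right hv1'
            (le_of_lt (mul_pos hA (by linarith : (0:ℝ) < t + sHS t)))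
          nlinarith [hcase2, h]
        have hc2v : v * (μp - μm) * sHS t ≤ (κp + μp - (μp - μm) * v) * t := by
          have h := mul_le_mul_of_nonneg_right hv1'
            (le_of_lt (mul_pos hB (by linarith : (0:ℝ) < t + sHS t)))
          nlinarith [hcase3, h]
        simp only [fHS, qHS]
        rw [if_pos ⟨hc1v, hc2v⟩]
      · rintro v ⟨hv1, hv1'⟩
        exact absurd hv1' (not_le.mpr hv1)
      · exact hs_cont1 κm μm (κp - κm) (μp - μm) (κp + μp) t (sHS t) hA hB hABK
      · exact (hs_cont1 κm μm (κp - κm) (μp - μm) (κp + μp) t (sHS t) hA hB hABK).mono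
          (Set.Icc_subset_Icc zero_le_one le_rfl)
      · exact hs_mono1 κm μm (κp - κm) (μp - μm) (κp + μp) t (sHS t) hA hB hABK ht0 hs0 hs2
      · exact (hs_mono1 κm μm (κp - κm) (μp - μm) (κp + μp) t (sHS t) hA hB hABK ht0 hs0
          hs2).mono (Set.Icc_subset_Icc zero_le_one le_rfl)
      · beta_reduce
        have e0 : (κm + 0 * (κp - κm)) * t ^ 2 + (μm + 0 * (μp - μm)) * (1 - t ^ 2)
            - 0 * (1 - 0) * ((κp - κm) * t - (μp - μm) * sHS t) ^ 2
              / (κp + μp - ((κp - κm) + (μp - μm)) * 0)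
            = κm * t ^ 2 + μm * (1 - t ^ 2) := by ring
        linarith [e0, hc₁]
      · beta_reduce
        have e1 : (κm + 1 * (κp - κm)) * t ^ 2 + (μm + 1 * (μp - μm)) * (1 - t ^ 2)
            - 1 * (1 - 1) * ((κp - κm) * t - (μp - μm) * sHS t) ^ 2
              / (κp + μp - ((κp - κm) + (μp - μm)) * 1)
            = κp * t ^ 2 + μp * (1 - t ^ 2) := by ring
        linarith [e1, hc₂]
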